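/- arXiv:1006.2532 — 3 statements merged into one kernel-verified Lean document; each statement's English description precedes it below -/
import Mathlib

section
/- Let n ≥ 1 be an integer, 0 < a < 1 and A > 0. Suppose φ : ℝⁿ → ℂ is integrable, satisfies |φ(x)| ≤ A(1+‖x‖)^{-n-a} for all x, and ∫_{ℝⁿ} φ(x) dx = 0. Then there is a constant C, depending only on n and a, such that for every function f : ℝⁿ → ℂ that is bounded by B and Lipschitz with constant L, and for every R > 0, one has |∫_{ℝⁿ} f(R·x) φ(x) dx| ≤ C · A · (B + L) · Rᵃ. -/
open MeasureTheory

open Set Real in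
private lemma flag_oneD (n : ℕ) (hn : 1 ≤ n) {a R : ℝ} (ha0 : 0 < a) (ha1 : a < 1)
    (hR : 0 < R) :
    ∫ y in Ioi (0:ℝ), y ^ (n - 1) * (min 1 (R * y) * (1 + y) ^ (-(n:ℝ) - a)) ≤
      (1 / (1 - a) + 1 / a) * R ^ a := by
  set c : ℝ := R⁻¹ with hcdef
  have hc : 0 < c := inv_pos.2 hR
  set g : ℝ → ℝ := fun y => y ^ (n - 1) * (min 1 (R * y) * (1 + y) ^ (-(n:ℝ) - a)) with hg
  have hgc : ContinuousOn g (Ioi (0:ℝ)) := by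
    apply ContinuousOn.mul (Continuous.continuousOn (by continuity))
    apply ContinuousOn.mul
      (Continuous.continuousOn (continuous_const.min (continuous_const.mul continuous_id)))
    exact ((continuous_const.add continuous_id).continuousOn).rpow_const
      (fun y hy => Or.inl (by simp only [mem_Ioi] at hy; intro h; simp at h; linarith))
  have hg0 : ∀ y ∈ Ioi (0:ℝ), 0 ≤ g y := by
    intro y hy
    have hy0 : (0:ℝ) < y := hy
    have : (0:ℝ) ≤ min 1 (R * y) := le_min zero_le_one (by positivity)
    positivity
  -- pointwise bounds
  have h1 : ∀ y ∈ Ioc (0:ℝ) c, g y ≤ R * y ^ (-a) := by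
    intro y hy
    have hy0 : 0 < y := hy.1
    have h1y : (0:ℝ) < 1 + y := by linarith
    have hRy : R * y ≤ 1 := by
      rw [← inv_inv R, ← hcdef]
      rw [mul_comm, ← le_div_iff₀ (by positivity), div_eq_mul_inv, one_mul, inv_inv]
      exact hy.2
    have hw : (0:ℝ) ≤ (1 + y) ^ (-(n:ℝ) - a) := (rpow_pos_of_pos h1y _).le
    calc g y ≤ y ^ (n - 1) * ((R * y) * (1 + y) ^ (-(n:ℝ) - a)) :=
          mul_le_mul_of_nonneg_left
            (mul_le_mul_of_nonneg_right (min_le_right _ _) hw) (by positivity)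
      _ = R * (y ^ (n - 1) * y ^ 1) * (1 + y) ^ (-(n:ℝ) - a) := by ring
      _ = R * y ^ n * (1 + y) ^ (-(n:ℝ) - a) := by
          rw [← pow_add, Nat.sub_add_cancel hn]
      _ ≤ R * (1 + y) ^ n * (1 + y) ^ (-(n:ℝ) - a) := by
          refine mul_le_mul_of_nonneg_right (mul_le_mul_of_nonneg_left ?_ hR.le) hw
          exact pow_le_pow_left₀ hy0.le (by linarith) n
      _ = R * (1 + y) ^ (-a) := by
          rw [mul_assoc, ← Real.rpow_natCast (1 + y) n, ← Real.rpow_add h1y,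
            show (n:ℝ) + (-(n:ℝ) - a) = -a from by ring]
      _ ≤ R * y ^ (-a) := by
          have := Real.rpow_le_rpow_of_nonpos hy0 (by linarith : y ≤ 1 + y)
            (by linarith : -a ≤ 0)
          exact mul_le_mul_of_nonneg_left this hR.le
  have h2 : ∀ y ∈ Ioi c, g y ≤ y ^ (-1 - a) := by
    intro y hy
    have hy0 : 0 < y := lt_trans hc hy
    have h1y : (0:ℝ) < 1 + y := by linarith
    have hw : (0:ℝ) ≤ (1 + y) ^ (-(n:ℝ) - a) := (rpow_pos_of_pos h1y _).le
    calc g y ≤ y ^ (n - 1) * (1 * (1 + y) ^ (-(n:ℝ) - a)) :=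
          mul_le_mul_of_nonneg_left
            (mul_le_mul_of_nonneg_right (min_le_left _ _) hw) (by positivity)
      _ = y ^ (n - 1) * (1 + y) ^ (-(n:ℝ) - a) := by ring
      _ ≤ y ^ (n - 1) * y ^ (-(n:ℝ) - a) := by
          refine mul_le_mul_of_nonneg_left ?_ (by positivity)
          exact Real.rpow_le_rpow_of_nonpos hy0 (by linarith) (by linarith)
      _ = y ^ (-1 - a) := by
          rw [← Real.rpow_natCast y (n - 1), ← Real.rpow_add hy0]
          congr 1
          rw [Nat.cast_sub hn]
          push_cast
          ring
  -- integrability of majorants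
  have hInt1 : IntegrableOn (fun y : ℝ => R * y ^ (-a)) (Ioc 0 c) := by
    have : IntervalIntegrable (fun y : ℝ => y ^ (-a)) volume 0 c :=
      intervalIntegral.intervalIntegrable_rpow' (by linarith)
    rw [intervalIntegrable_iff_integrableOn_Ioc_of_le hc.le] at this
    exact this.const_mul R
  have hInt2 : IntegrableOn (fun y : ℝ => y ^ (-1 - a)) (Ioi c) :=
    integrableOn_Ioi_rpow_of_lt (by linarith) hc
  have hg1 : IntegrableOn g (Ioc 0 c) := by
    refine hInt1.mono' ((hgc.mono Ioc_subset_Ioi_self).aestronglyMeasurable measurableSet_Ioc) ?_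
    filter_upwards [ae_restrict_mem measurableSet_Ioc] with y hy
    rw [Real.norm_of_nonneg (hg0 y hy.1)]
    exact h1 y hy
  have hg2 : IntegrableOn g (Ioi c) := by
    refine hInt2.mono' ((hgc.mono (Ioi_subset_Ioi hc.le)).aestronglyMeasurable measurableSet_Ioi) ?_
    filter_upwards [ae_restrict_mem measurableSet_Ioi] with y hy
    rw [Real.norm_of_nonneg (hg0 y (lt_trans hc hy))]
    exact h2 y hy
  have hsplit : ∫ y in Ioi (0:ℝ), g y =
      (∫ y in Ioc (0:ℝ) c, g y) + ∫ y in Ioi c, g y := by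
    rw [← setIntegral_union (Ioc_disjoint_Ioi le_rfl) measurableSet_Ioi hg1 hg2,
      Ioc_union_Ioi_eq_Ioi hc.le]
  have e1 : ∫ y in Ioc (0:ℝ) c, g y ≤ R ^ a / (1 - a) := by
    have hm : ∫ y in Ioc (0:ℝ) c, g y ≤ ∫ y in Ioc (0:ℝ) c, R * y ^ (-a) :=
      setIntegral_mono_on hg1 hInt1 measurableSet_Ioc h1
    have h3 : (R⁻¹ : ℝ) ^ (-a + 1) = R ^ (a - 1) := by
      rw [← Real.rpow_neg_one R, ← Real.rpow_mul hR.le]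
      congr 1; ring
    have h4 : R ^ a = R * R ^ (a - 1) := by
      rw [show a = 1 + (a - 1) from by ring, Real.rpow_add hR, Real.rpow_one]
      ring_nf
    have hval : ∫ y in Ioc (0:ℝ) c, R * y ^ (-a) = R ^ a / (1 - a) := by
      rw [integral_const_mul, ← intervalIntegral.integral_of_le hc.le,
        integral_rpow (Or.inl (by linarith)),
        Real.zero_rpow (by linarith : (0:ℝ) < -a + 1).ne', hcdef, h3, h4, sub_zero,
        show (-a + 1 : ℝ) = 1 - a from by ring]
      ring
    rw [hval] at hm; exact hm
  have e2 : ∫ y in Ioi c, g y ≤ R ^ a / a := by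
    have hm : ∫ y in Ioi c, g y ≤ ∫ y in Ioi c, y ^ (-1 - a) :=
      setIntegral_mono_on hg2 hInt2 measurableSet_Ioi h2
    have hval : ∫ y in Ioi c, (y:ℝ) ^ (-1 - a) = R ^ a / a := by
      have h5 : (R⁻¹ : ℝ) ^ (-a) = R ^ a := by
        rw [Real.inv_rpow hR.le, Real.rpow_neg hR.le, inv_inv]
      rw [integral_Ioi_rpow_of_lt (by linarith) hc,
        show (-1 - a + 1 : ℝ) = -a from by ring, hcdef, h5, neg_div, div_neg, neg_neg]
    rw [hval] at hm; exact hm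
  calc ∫ y in Ioi (0:ℝ), g y ≤ R ^ a / (1 - a) + R ^ a / a := by
        rw [hsplit]; exact add_le_add e1 e2
    _ = (1 / (1 - a) + 1 / a) * R ^ a := by ring

open Set Real in
private lemma flag_keyJ (n : ℕ) (hn : 1 ≤ n) {a R : ℝ} (ha0 : 0 < a) (ha1 : a < 1)
    (hR : 0 < R) :
    ∫ x : EuclideanSpace ℝ (Fin n), min 1 (R * ‖x‖) * (1 + ‖x‖) ^ (-(n:ℝ) - a) ≤
      (n : ℝ) * (volume (Metric.ball (0 : EuclideanSpace ℝ (Fin n)) 1)).toReal *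
        ((1 / (1 - a) + 1 / a) * R ^ a) := by
  haveI : Nonempty (Fin n) := ⟨⟨0, hn⟩⟩
  haveI : Nontrivial (EuclideanSpace ℝ (Fin n)) := by
    refine ⟨0, EuclideanSpace.single ⟨0, hn⟩ (1:ℝ), ?_⟩
    intro h
    have := congrArg norm h
    simp [EuclideanSpace.norm_single] at this
  have hpolar := MeasureTheory.integral_fun_norm_addHaar
    (volume : Measure (EuclideanSpace ℝ (Fin n)))
    (fun s : ℝ => min 1 (R * s) * (1 + s) ^ (-(n:ℝ) - a))
  rw [finrank_euclideanSpace_fin] at hpolar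
  rw [show (fun x : EuclideanSpace ℝ (Fin n) => min 1 (R * ‖x‖) * (1 + ‖x‖) ^ (-(n:ℝ) - a)) =
      (fun x : EuclideanSpace ℝ (Fin n) =>
        (fun s : ℝ => min 1 (R * s) * (1 + s) ^ (-(n:ℝ) - a)) ‖x‖) from rfl] at *
  rw [hpolar, nsmul_eq_mul, smul_eq_mul]
  simp_rw [smul_eq_mul]
  have h1 := flag_oneD n hn ha0 ha1 hR
  have hc0 : (0:ℝ) ≤ (volume (Metric.ball (0 : EuclideanSpace ℝ (Fin n)) 1)).toReal :=
    ENNReal.toReal_nonneg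
  calc (n : ℝ) * ((volume (Metric.ball (0 : EuclideanSpace ℝ (Fin n)) 1)).toReal *
        ∫ y in Ioi (0:ℝ), y ^ (n - 1) * (min 1 (R * y) * (1 + y) ^ (-(n:ℝ) - a)))
      ≤ (n : ℝ) * ((volume (Metric.ball (0 : EuclideanSpace ℝ (Fin n)) 1)).toReal *
        ((1 / (1 - a) + 1 / a) * R ^ a)) := by
        refine mul_le_mul_of_nonneg_left (mul_le_mul_of_nonneg_left h1 hc0) ?_
        positivity
    _ = (n : ℝ) * (volume (Metric.ball (0 : EuclideanSpace ℝ (Fin n)) 1)).toReal *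
        ((1 / (1 - a) + 1 / a) * R ^ a) := by ring


/-- cancellation estimate for a mean-zero function of Folland–Stein class `R(a)`
on ℝⁿ: `|∫ f(R•x) φ(x) dx| ≤ C ⬝ A ⬝ (B + L) ⬝ Rᵃ`, with `C` depending only on `n` and `a`. -/
theorem flag_cancellation_estimate
    (n : ℕ) (hn : 1 ≤ n) (a : ℝ) (ha0 : 0 < a) (ha1 : a < 1) :
    ∃ C : ℝ, ∀ (A : ℝ), 0 < A →
      ∀ φ : EuclideanSpace ℝ (Fin n) → ℂ, Integrable φ →
        (∀ x, ‖φ x‖ ≤ A * (1 + ‖x‖) ^ (-(n : ℝ) - a)) →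
        (∫ x, φ x) = 0 →
        ∀ (f : EuclideanSpace ℝ (Fin n) → ℂ) (B L : ℝ),
          (∀ x, ‖f x‖ ≤ B) →
          (∀ x y, ‖f x - f y‖ ≤ L * ‖x - y‖) →
          ∀ R : ℝ, 0 < R →
            ‖∫ x, f (R • x) * φ x‖ ≤ C * A * (B + L) * R ^ a := by
  set K0 : ℝ := (n : ℝ) * (volume (Metric.ball (0 : EuclideanSpace ℝ (Fin n)) 1)).toReal *
    (1 / (1 - a) + 1 / a) with hK0
  have ha1' : (0:ℝ) < 1 - a := by linarith
  have hK0nn : 0 ≤ K0 := by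
    refine mul_nonneg (mul_nonneg (Nat.cast_nonneg n) ENNReal.toReal_nonneg) ?_
    positivity
  refine ⟨2 * K0, ?_⟩
  intro A hA φ hφint hφbd hφ0 f B L hB hLip R hR
  have hB0 : 0 ≤ B := le_trans (norm_nonneg _) (hB 0)
  have hL0 : 0 ≤ L := by
    have h := hLip (EuclideanSpace.single ⟨0, hn⟩ (1:ℝ)) 0
    rw [sub_zero, EuclideanSpace.norm_single, norm_one, mul_one] at h
    exact le_trans (norm_nonneg _) h
  have hf_cont : Continuous f := by
    have : LipschitzWith (Real.toNNReal L) f := by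
      apply LipschitzWith.of_dist_le_mul
      intro x y
      rw [dist_eq_norm, dist_eq_norm]
      calc ‖f x - f y‖ ≤ L * ‖x - y‖ := hLip x y
        _ ≤ (Real.toNNReal L) * ‖x - y‖ :=
            mul_le_mul_of_nonneg_right (Real.le_coe_toNNReal L) (norm_nonneg _)
    exact this.continuous
  have I1 : Integrable (fun x => f (R • x) * φ x) :=
    hφint.bdd_mul ((hf_cont.comp (continuous_const_smul R)).aestronglyMeasurable)
      (c := B) (Filter.Eventually.of_forall fun x => hB _)
  have I2 : Integrable (fun x => f 0 * φ x) := hφint.const_mul _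
  have hrw : ∫ x, f (R • x) * φ x = ∫ x, (f (R • x) - f 0) * φ x := by
    simp_rw [sub_mul]
    rw [integral_sub I1 I2, integral_const_mul, hφ0, mul_zero, sub_zero]
  rw [hrw]
  have hmin_nn : ∀ x : EuclideanSpace ℝ (Fin n), (0:ℝ) ≤ min 1 (R * ‖x‖) := fun x =>
    le_min zero_le_one (by positivity)
  have hmin_cont : Continuous (fun x : EuclideanSpace ℝ (Fin n) =>
      min 1 (R * ‖x‖) * (1 + ‖x‖) ^ (-(n:ℝ) - a)) := by
    apply Continuous.mul
    · exact continuous_const.min (continuous_const.mul continuous_norm)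
    · refine (continuous_const.add continuous_norm).rpow_const fun x => Or.inl ?_
      exact (by positivity : (0:ℝ) < 1 + ‖x‖).ne'
  have hmin_int : Integrable (fun x : EuclideanSpace ℝ (Fin n) =>
      min 1 (R * ‖x‖) * (1 + ‖x‖) ^ (-(n:ℝ) - a)) := by
    refine Integrable.mono'
      (g := fun x : EuclideanSpace ℝ (Fin n) => (1 + ‖x‖) ^ (-((n:ℝ) + a)))
      ?_ hmin_cont.aestronglyMeasurable ?_
    · exact integrable_one_add_norm (by rw [finrank_euclideanSpace_fin]; linarith)
    · filter_upwards with x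
      have h1x : (0:ℝ) < 1 + ‖x‖ := by positivity
      have hw : (0:ℝ) ≤ (1 + ‖x‖) ^ (-(n:ℝ) - a) := (Real.rpow_pos_of_pos h1x _).le
      rw [Real.norm_of_nonneg (mul_nonneg (hmin_nn x) hw),
        show -((n:ℝ) + a) = -(n:ℝ) - a from by ring]
      exact mul_le_of_le_one_left hw (min_le_left _ _)
  have hpt : ∀ x : EuclideanSpace ℝ (Fin n), ‖(f (R • x) - f 0) * φ x‖ ≤
      ((2 * B + L) * A) * (min 1 (R * ‖x‖) * (1 + ‖x‖) ^ (-(n:ℝ) - a)) := by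
    intro x
    have h1 : ‖f (R • x) - f 0‖ ≤ (2 * B + L) * min 1 (R * ‖x‖) := by
      rcases le_total 1 (R * ‖x‖) with h | h
      · rw [min_eq_left h]
        calc ‖f (R • x) - f 0‖ ≤ ‖f (R • x)‖ + ‖f 0‖ := norm_sub_le _ _
          _ ≤ (2 * B + L) * 1 := by
              have := hB (R • x); have := hB (0 : EuclideanSpace ℝ (Fin n)); linarith
      · rw [min_eq_right h]
        calc ‖f (R • x) - f 0‖ ≤ L * ‖R • x - 0‖ := hLip _ _
          _ = L * (R * ‖x‖) := by
              rw [sub_zero, norm_smul, Real.norm_eq_abs, abs_of_pos hR]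
          _ ≤ (2 * B + L) * (R * ‖x‖) :=
              mul_le_mul_of_nonneg_right (by linarith) (by positivity)
    calc ‖(f (R • x) - f 0) * φ x‖ = ‖f (R • x) - f 0‖ * ‖φ x‖ := norm_mul _ _
      _ ≤ ((2 * B + L) * min 1 (R * ‖x‖)) * (A * (1 + ‖x‖) ^ (-(n:ℝ) - a)) := by
          refine mul_le_mul h1 (hφbd x) (norm_nonneg _) ?_
          exact mul_nonneg (by linarith) (hmin_nn x)
      _ = ((2 * B + L) * A) * (min 1 (R * ‖x‖) * (1 + ‖x‖) ^ (-(n:ℝ) - a)) := by ring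
  have I3 : Integrable (fun x => (f (R • x) - f 0) * φ x) := by
    have h := I1.sub I2
    simpa only [sub_mul, Pi.sub_def] using h
  have hle : ‖∫ x, (f (R • x) - f 0) * φ x‖ ≤
      ((2 * B + L) * A) * ∫ x : EuclideanSpace ℝ (Fin n), min 1 (R * ‖x‖) * (1 + ‖x‖) ^ (-(n:ℝ) - a) := by
    calc ‖∫ x, (f (R • x) - f 0) * φ x‖ ≤ ∫ x, ‖(f (R • x) - f 0) * φ x‖ :=
          norm_integral_le_integral_norm _
      _ ≤ ∫ x : EuclideanSpace ℝ (Fin n), ((2 * B + L) * A) * (min 1 (R * ‖x‖) * (1 + ‖x‖) ^ (-(n:ℝ) - a)) :=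
          integral_mono I3.norm (hmin_int.const_mul _) hpt
      _ = ((2 * B + L) * A) * ∫ x : EuclideanSpace ℝ (Fin n), min 1 (R * ‖x‖) * (1 + ‖x‖) ^ (-(n:ℝ) - a) :=
          integral_const_mul _ _
  have hJ := flag_keyJ n hn ha0 ha1 hR
  have hRa : (0:ℝ) < R ^ a := Real.rpow_pos_of_pos hR a
  calc ‖∫ x, (f (R • x) - f 0) * φ x‖
      ≤ ((2 * B + L) * A) * ∫ x : EuclideanSpace ℝ (Fin n), min 1 (R * ‖x‖) * (1 + ‖x‖) ^ (-(n:ℝ) - a) := hle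
    _ ≤ ((2 * B + L) * A) * (K0 * R ^ a) := by
        refine mul_le_mul_of_nonneg_left ?_ (by positivity)
        calc (∫ x : EuclideanSpace ℝ (Fin n), min 1 (R * ‖x‖) * (1 + ‖x‖) ^ (-(n:ℝ) - a))
            ≤ (n : ℝ) * (volume (Metric.ball (0 : EuclideanSpace ℝ (Fin n)) 1)).toReal *
              ((1 / (1 - a) + 1 / a) * R ^ a) := hJ
          _ = K0 * R ^ a := by rw [hK0]; ring
    _ ≤ 2 * K0 * A * (B + L) * R ^ a := by nlinarith [mul_nonneg (mul_nonneg hK0nn hA.le) hRa.le]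
end

section
/- Let n ≥ 1 be an integer, 0 < a < 1 and A > 0. Suppose φ : ℝⁿ → ℂ is integrable, satisfies |φ(x)| ≤ A(1+‖x‖)^{-n-a} for all x, and ∫_{ℝⁿ} φ(x) dx = 0. Then there is a constant C, depending only on n and a, such that the Fourier transform φ̂ satisfies |φ̂(ξ)| ≤ C · A · ‖ξ‖ᵃ for all ξ ∈ ℝⁿ. -/
open MeasureTheory Real Set FourierTransform

lemma norm_exp_mul_I_sub_one_le' (θ : ℝ) :
    ‖Complex.exp (θ * Complex.I) - 1‖ ≤ min 2 |θ| := by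
  have hkey : ‖Complex.exp (θ * Complex.I) - 1‖ = 2 * |Real.sin (θ / 2)| := by
    have h1 : Complex.exp (θ * Complex.I) - 1
        = Complex.ofReal (Real.cos θ - 1) + Complex.ofReal (Real.sin θ) * Complex.I := by
      rw [Complex.exp_mul_I]
      push_cast
      ring
    rw [h1, Complex.norm_def, Complex.normSq_add_mul_I]
    have h2 : (Real.cos θ - 1) ^ 2 + Real.sin θ ^ 2 = 4 * ((1 - Real.cos θ) / 2) := by
      nlinarith [Real.sin_sq_add_cos_sq θ]
    rw [h2, show (4 : ℝ) = 2 ^ 2 by norm_num, Real.sqrt_mul (by positivity),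
      Real.sqrt_sq (by norm_num : (0:ℝ) ≤ 2), ← Real.abs_sin_half]
  rw [hkey]
  refine le_min ?_ ?_
  · nlinarith [Real.abs_sin_le_one (θ / 2)]
  · have := Real.abs_sin_le_abs (x := θ / 2)
    rw [abs_div] at this
    simp only [abs_two] at this
    linarith

lemma pow_aux (n : ℕ) (hn : 1 ≤ n) (a : ℝ) {r : ℝ} (c : ℝ) (hr0 : 0 < r) :
    r ^ (n-1) * (r ^ (-(n:ℝ)-a) * c) = c * r ^ (-1-a) := by
  have hcast : ((n - 1 : ℕ) : ℝ) = (n : ℝ) - 1 := by rw [Nat.cast_sub hn]; norm_num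
  rw [← Real.rpow_natCast r (n-1), hcast]
  calc r ^ ((n:ℝ)-1) * (r ^ (-(n:ℝ)-a) * c)
      = (r ^ ((n:ℝ)-1) * r ^ (-(n:ℝ)-a)) * c := by ring
    _ = r ^ (-1-a) * c := by
        rw [← Real.rpow_add hr0, show ((n:ℝ)-1 + (-(n:ℝ)-a)) = -1-a by ring]
    _ = c * r ^ (-1-a) := by ring

lemma oneD_bound (n : ℕ) (hn : 1 ≤ n) (a : ℝ) (ha0 : 0 < a) (ha1 : a < 1)
    (ε : ℝ) (hε0 : 0 < ε) (hε1 : ε ≤ 1) :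
    ∫ r in Ioi (0:ℝ), r ^ (n-1) * ((1+r) ^ (-(n:ℝ)-a) * min 2 (2*π*(r*ε)))
      ≤ (2*π/(1-a) + 2/a) * ε ^ a := by
  have hn0 : (0:ℝ) ≤ (n:ℝ) := Nat.cast_nonneg n
  set R : ℝ := ε⁻¹ with hRdef
  have hR1 : 1 ≤ R := one_le_inv_iff₀.mpr ⟨hε0, hε1⟩
  have hR0 : 0 < R := lt_of_lt_of_le one_pos hR1
  set h : ℝ → ℝ := fun r => r ^ (n-1) * ((1+r) ^ (-(n:ℝ)-a) * min 2 (2*π*(r*ε))) with hh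
  have hexp : -(n:ℝ) - a ≤ 0 := by linarith
  have hRε : R ^ (-a) = ε ^ a := by
    rw [hRdef, ← Real.rpow_neg_one ε, ← Real.rpow_mul hε0.le]
    norm_num
  have hbound1 : ∀ r ∈ Ioc (0:ℝ) R, h r ≤ (2*π*ε) * r ^ (-a) := by
    intro r hr
    have hr0 : 0 < r := hr.1
    have e1 : (1+r) ^ (-(n:ℝ)-a) ≤ r ^ (-(n:ℝ)-a) :=
      Real.rpow_le_rpow_of_nonpos hr0 (by linarith) hexp
    have e3 : h r ≤ r ^ (n-1) * (r ^ (-(n:ℝ)-a) * (2*π*(r*ε))) := by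
      apply mul_le_mul_of_nonneg_left _ (by positivity)
      exact mul_le_mul e1 (min_le_right _ _) (le_min (by norm_num) (by positivity)) (by positivity)
    refine e3.trans (le_of_eq ?_)
    rw [pow_aux n hn a _ hr0]
    rw [show (-1 - a : ℝ) = -a + (-1) by ring, Real.rpow_add hr0, Real.rpow_neg_one]
    field_simp
  have hbound2 : ∀ r ∈ Ioi R, h r ≤ 2 * r ^ (-1-a) := by
    intro r hr
    have hr0 : 0 < r := lt_trans hR0 hr
    have e1 : (1+r) ^ (-(n:ℝ)-a) ≤ r ^ (-(n:ℝ)-a) :=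
      Real.rpow_le_rpow_of_nonpos hr0 (by linarith) hexp
    have e3 : h r ≤ r ^ (n-1) * (r ^ (-(n:ℝ)-a) * 2) := by
      apply mul_le_mul_of_nonneg_left _ (by positivity)
      exact mul_le_mul e1 (min_le_left _ _) (le_min (by norm_num) (by positivity)) (by positivity)
    exact e3.trans (le_of_eq (pow_aux n hn a _ hr0))
  have hnonneg : ∀ r : ℝ, 0 ≤ r → 0 ≤ h r := fun r hr => by
    apply mul_nonneg (by positivity)
    exact mul_nonneg (by positivity) (le_min (by norm_num) (by positivity))
  have hcont : ContinuousOn h (Icc 0 R) := by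
    apply ContinuousOn.mul (Continuous.continuousOn (by continuity))
    apply ContinuousOn.mul
    · apply ContinuousOn.rpow_const ((continuous_const.add continuous_id).continuousOn)
      intro r hr
      left
      have h0 : (0:ℝ) ≤ r := hr.1
      intro hc
      simp only [Pi.add_apply, id_eq] at hc
      linarith
    · exact (continuous_const.min (by continuity)).continuousOn
  have hint1 : IntegrableOn h (Ioc 0 R) :=
    (hcont.integrableOn_Icc).mono_set Ioc_subset_Icc_self
  have hint_dom2 : IntegrableOn (fun r : ℝ => 2 * r ^ (-1-a)) (Ioi R) :=
    (integrableOn_Ioi_rpow_of_lt (by linarith) hR0).const_mul 2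
  have hmeas : Measurable h := by fun_prop
  have hint2 : IntegrableOn h (Ioi R) := by
    apply hint_dom2.mono' hmeas.aestronglyMeasurable.restrict
    filter_upwards [ae_restrict_mem measurableSet_Ioi] with r hr
    rw [Real.norm_of_nonneg (hnonneg r (lt_trans hR0 hr).le)]
    exact hbound2 r hr
  have hint_dom1 : IntegrableOn (fun r : ℝ => (2*π*ε) * r ^ (-a)) (Ioc 0 R) :=
    ((intervalIntegral.intervalIntegrable_rpow' (by linarith)).1).const_mul _
  have hsplit : ∫ r in Ioi (0:ℝ), h r = (∫ r in Ioc 0 R, h r) + ∫ r in Ioi R, h r := by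
    rw [← setIntegral_union (Ioc_disjoint_Ioi le_rfl) measurableSet_Ioi hint1 hint2,
      Ioc_union_Ioi_eq_Ioi hR0.le]
  have hval1 : ∫ r in Ioc 0 R, h r ≤ (2*π/(1-a)) * ε ^ a := by
    refine (setIntegral_mono_on hint1 hint_dom1 measurableSet_Ioc hbound1).trans ?_
    rw [integral_const_mul]
    have hI : ∫ r in Ioc (0:ℝ) R, r ^ (-a) = (R ^ (-a+1) - 0 ^ (-a+1)) / (-a+1) := by
      rw [← intervalIntegral.integral_of_le hR0.le]
      exact integral_rpow (Or.inl (by linarith))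
    have hRe : R ^ (-a+1) = ε ^ (a-1) := by
      rw [hRdef, ← Real.rpow_neg_one ε, ← Real.rpow_mul hε0.le]
      norm_num
      rw [show a - 1 = -(-a+1) by ring]
      congr 1; ring
    rw [hI, Real.zero_rpow (by linarith), hRe]
    have hεa : ε * ε ^ (a-1) = ε ^ a := by
      nth_rewrite 1 [← Real.rpow_one ε]
      rw [← Real.rpow_add hε0]
      norm_num
    rw [show (2*π*ε) * ((ε ^ (a-1) - 0)/(-a+1)) = (2*π/(1-a)) * (ε * ε ^ (a-1)) by
      rw [sub_zero]; field_simp; ring]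
    rw [hεa]
  have hval2 : ∫ r in Ioi R, h r ≤ (2/a) * ε ^ a := by
    refine (setIntegral_mono_on hint2 hint_dom2 measurableSet_Ioi hbound2).trans ?_
    rw [integral_const_mul, integral_Ioi_rpow_of_lt (by linarith) hR0]
    rw [show (-1-a+1 : ℝ) = -a by ring]
    rw [hRε]
    rw [show 2 * (-ε ^ a / (-a)) = (2/a) * ε ^ a by rw [neg_div_neg_eq]; ring]
  calc ∫ r in Ioi (0:ℝ), h r = (∫ r in Ioc 0 R, h r) + ∫ r in Ioi R, h r := hsplit
    _ ≤ (2*π/(1-a)) * ε ^ a + (2/a) * ε ^ a := add_le_add hval1 hval2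
    _ = (2*π/(1-a) + 2/a) * ε ^ a := by ring

/-- a mean-zero integrable function on ℝⁿ dominated by `A(1+‖x‖)^{-n-a}` has
Fourier transform bounded by `C ⬝ A ⬝ ‖ξ‖ᵃ`, with `C` depending only on `n` and `a`. -/
theorem fourier_transform_bound_of_cancellation
    (n : ℕ) (hn : 1 ≤ n) (a : ℝ) (ha0 : 0 < a) (ha1 : a < 1) :
    ∃ C : ℝ, ∀ (A : ℝ), 0 < A →
      ∀ φ : EuclideanSpace ℝ (Fin n) → ℂ, Integrable φ →
        (∀ x, ‖φ x‖ ≤ A * (1 + ‖x‖) ^ (-(n : ℝ) - a)) →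
        (∫ x, φ x) = 0 →
        ∀ ξ : EuclideanSpace ℝ (Fin n), ‖𝓕 φ ξ‖ ≤ C * A * ‖ξ‖ ^ a := by
  classical
  set E := EuclideanSpace ℝ (Fin n) with hE
  haveI : Nonempty (Fin n) := ⟨⟨0, hn⟩⟩
  haveI : Nontrivial E := inferInstance
  have hn0 : (0:ℝ) ≤ (n:ℝ) := Nat.cast_nonneg n
  have hπ := Real.pi_pos
  -- the dominating profile is integrable
  have integrable_dom : Integrable (fun x : E => (1+‖x‖) ^ (-(n:ℝ)-a)) := by
    have hlt : (Module.finrank ℝ E : ℝ) < (n:ℝ) + a := by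
      rw [finrank_euclideanSpace_fin]; linarith
    have := integrable_one_add_norm (E := E) (μ := volume) hlt
    simpa [show -((n:ℝ)+a) = -(n:ℝ)-a from by ring] using this
  set C₀ : ℝ := ∫ x : E, (1+‖x‖) ^ (-(n:ℝ)-a) with hC₀def
  have hC₀ : 0 ≤ C₀ := integral_nonneg fun x => by positivity
  set K : ℝ := 2*Real.pi/(1-a) + 2/a with hKdef
  have hK : 0 < K := add_pos (div_pos (by positivity) (by linarith)) (div_pos two_pos ha0)
  set V₁ : ℝ := (volume (Metric.ball (0:E) 1)).toReal with hV₁def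
  have hV₁ : 0 ≤ V₁ := ENNReal.toReal_nonneg
  set C₁ : ℝ := (n : ℝ) * V₁ * K with hC₁def
  have hC₁ : 0 ≤ C₁ := mul_nonneg (mul_nonneg hn0 hV₁) hK.le
  refine ⟨C₀ + C₁, fun A hA φ hφ hbφ h0 ξ => ?_⟩
  by_cases hξ0 : ξ = 0
  · subst hξ0
    have hFzero : 𝓕 φ (0 : E) = ∫ v, φ v := by
      rw [Real.fourier_eq]
      simp
    rw [hFzero, h0]
    simp only [norm_zero]
    rw [Real.zero_rpow (ne_of_gt ha0)]
    simp
  by_cases hbig : 1 ≤ ‖ξ‖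
  · -- large frequencies: trivial bound
    have h1 : ‖𝓕 φ ξ‖ ≤ ∫ v, ‖φ v‖ :=
      VectorFourier.norm_fourierIntegral_le_integral_norm _ _ _ _ _
    have h2 : ∫ v, ‖φ v‖ ≤ A * C₀ := by
      have := integral_mono hφ.norm (integrable_dom.const_mul A) hbφ
      rwa [integral_const_mul] at this
    have hξa : 1 ≤ ‖ξ‖ ^ a := Real.one_le_rpow hbig ha0.le
    refine h1.trans (h2.trans ?_)
    nlinarith [mul_nonneg hC₁ hA.le, mul_nonneg (mul_nonneg hC₀ hA.le) (sub_nonneg.mpr hξa),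
      mul_nonneg (mul_nonneg hC₁ hA.le) (sub_nonneg.mpr hξa)]
  -- small frequencies
  push_neg at hbig
  set ε : ℝ := ‖ξ‖ with hεdef
  have hε0 : 0 < ε := norm_pos_iff.mpr hξ0
  have hε1 : ε ≤ 1 := hbig.le
  set e : E → ℂ := fun v => Complex.exp (↑(-2 * Real.pi * (inner ℝ v ξ : ℝ)) * Complex.I)
    with hedef
  have hecont : Continuous e :=
    Complex.continuous_exp.comp
      ((Complex.continuous_ofReal.comp
        (continuous_const.mul (continuous_id.inner continuous_const))).mul continuous_const)
  have h1 : Integrable (fun v => e v * φ v) := by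
    refine hφ.bdd_mul hecont.aestronglyMeasurable (c := 1) (Filter.Eventually.of_forall fun v => ?_)
    rw [hedef]
    beta_reduce
    rw [Complex.norm_exp_ofReal_mul_I]
  have h3 : Integrable (fun v => (e v - 1) * φ v) := by
    have := h1.sub hφ
    simpa [sub_mul, Pi.sub_def] using this
  have hkey : 𝓕 φ ξ = ∫ v, (e v - 1) * φ v := by
    have hsub : ∫ v, (e v - 1) * φ v = (∫ v, e v * φ v) - ∫ v, φ v := by
      rw [← integral_sub h1 hφ]
      congr 1
      ext v
      ring
    rw [Real.fourier_eq']
    simp_rw [smul_eq_mul]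
    rw [hsub, h0, sub_zero]
  -- pointwise bound
  set g : ℝ → ℝ := fun r => A * ((1+r) ^ (-(n:ℝ)-a) * min 2 (2*Real.pi*(r*ε))) with hgdef
  have hgnonneg : ∀ r : ℝ, 0 ≤ r → 0 ≤ g r := fun r hr =>
    mul_nonneg hA.le (mul_nonneg (by positivity) (le_min (by norm_num) (by positivity)))
  have hptwise : ∀ v : E, ‖(e v - 1) * φ v‖ ≤ g ‖v‖ := by
    intro v
    rw [norm_mul]
    have hE1 : ‖e v - 1‖ ≤ min 2 (2*Real.pi*(‖v‖*ε)) := by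
      refine (norm_exp_mul_I_sub_one_le' _).trans (min_le_min le_rfl ?_)
      have h₁ : |(-2*Real.pi*(inner ℝ v ξ:ℝ))| = 2*Real.pi*|(inner ℝ v ξ : ℝ)| := by
        rw [abs_mul, abs_mul]
        rw [abs_of_nonpos (by norm_num : (-2:ℝ) ≤ 0), abs_of_nonneg hπ.le]
        norm_num
      rw [h₁, mul_assoc, mul_assoc]
      refine mul_le_mul_of_nonneg_left ?_ (by norm_num)
      refine mul_le_mul_of_nonneg_left ?_ hπ.le
      exact abs_real_inner_le_norm v ξ
    have hmin_nonneg : 0 ≤ min 2 (2*Real.pi*(‖v‖*ε)) := le_min (by norm_num) (by positivity)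
    calc ‖e v - 1‖ * ‖φ v‖
        ≤ (min 2 (2*Real.pi*(‖v‖*ε))) * (A * (1+‖v‖) ^ (-(n:ℝ)-a)) :=
          mul_le_mul hE1 (hbφ v) (norm_nonneg _) hmin_nonneg
      _ = g ‖v‖ := by rw [hgdef]; ring
  -- integrability of the radial dominating function
  have hgmeas : Measurable g := by fun_prop
  have h_int_g : Integrable (fun v : E => g ‖v‖) := by
    refine (integrable_dom.const_mul (A*2)).mono'
      ((hgmeas.comp measurable_norm).aestronglyMeasurable) (Filter.Eventually.of_forall fun v => ?_)
    rw [Real.norm_of_nonneg (hgnonneg _ (norm_nonneg v)), hgdef]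
    have hX : (0:ℝ) ≤ (1+‖v‖) ^ (-(n:ℝ)-a) := by positivity
    calc A * ((1+‖v‖) ^ (-(n:ℝ)-a) * min 2 (2*Real.pi*(‖v‖*ε)))
        ≤ A * ((1+‖v‖) ^ (-(n:ℝ)-a) * 2) :=
          mul_le_mul_of_nonneg_left
            (mul_le_mul_of_nonneg_left (min_le_left _ _) hX) hA.le
      _ = A * 2 * (1+‖v‖) ^ (-(n:ℝ)-a) := by ring
  -- compare with the radial integral
  have hmain : ‖𝓕 φ ξ‖ ≤ ∫ v : E, g ‖v‖ := by
    rw [hkey]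
    refine (norm_integral_le_integral_norm _).trans ?_
    exact integral_mono h3.norm h_int_g hptwise
  -- polar coordinates
  have hpolar : ∫ v : E, g ‖v‖
      = n • V₁ • ∫ r in Set.Ioi (0:ℝ), r ^ (n-1) • g r := by
    have := integral_fun_norm_addHaar (volume : Measure E) g
    rwa [finrank_euclideanSpace_fin] at this
  have hpull : ∫ r in Set.Ioi (0:ℝ), r ^ (n-1) • g r
      = A * ∫ r in Set.Ioi (0:ℝ), r ^ (n-1) * ((1+r) ^ (-(n:ℝ)-a) * min 2 (2*Real.pi*(r*ε))) := by
    simp only [smul_eq_mul, hgdef]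
    rw [← integral_const_mul]
    congr 1
    ext r
    ring
  have h1d := oneD_bound n hn a ha0 ha1 ε hε0 hε1
  have hfinal : ∫ v : E, g ‖v‖ ≤ C₁ * A * ε ^ a := by
    rw [hpolar, hpull, nsmul_eq_mul, smul_eq_mul]
    calc (n:ℝ) * (V₁ * (A * ∫ r in Set.Ioi (0:ℝ),
            r ^ (n-1) * ((1+r) ^ (-(n:ℝ)-a) * min 2 (2*Real.pi*(r*ε)))))
        ≤ (n:ℝ) * (V₁ * (A * (K * ε ^ a))) := by
          refine mul_le_mul_of_nonneg_left (mul_le_mul_of_nonneg_left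
            (mul_le_mul_of_nonneg_left ?_ hA.le) hV₁) hn0
          exact h1d
      _ = C₁ * A * ε ^ a := by rw [hC₁def]; ring
  refine hmain.trans (hfinal.trans ?_)
  have : 0 ≤ A * ε ^ a := mul_nonneg hA.le (by positivity)
  nlinarith [mul_nonneg hC₀ this]
end

section
/- Let n ≥ 1 be an integer, 0 < a < 1, m ≥ 0 a real number, and C > 0. Suppose u : (0,∞) × ℝⁿ → ℂ is measurable and satisfies |u(t,x)| ≤ C(t + 1 + ‖x‖)^{-n-1-m} for all t > 0 and x ∈ ℝⁿ. Then for every x ∈ ℝⁿ the integral g(x) = ∫_0^∞ t^{-a} u(t,x) dt converges absolutely, and there is a constant C′ depending only on n, m, a and C such that |g(x)| ≤ C′ (1+‖x‖)^{-n-a-m} for all x. -/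
open MeasureTheory Set

lemma majorant_facts {a b R : ℝ} (ha0 : 0 < a) (ha1 : a < 1) (hb : 1 < b)
    (hR : 1 ≤ R) :
    IntegrableOn (fun t : ℝ => t ^ (-a) * (t + R) ^ (-b)) (Ioi 0) volume ∧
    ∫ t in Ioi (0:ℝ), t ^ (-a) * (t + R) ^ (-b) ≤
      (1 / (1 - a) + 1 / (a + b - 1)) * R ^ (1 - a - b) := by
  have hR0 : (0:ℝ) < R := lt_of_lt_of_le one_pos hR
  have hcont : ContinuousOn (fun t : ℝ => t ^ (-a) * (t + R) ^ (-b)) (Ioi 0) := by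
    apply ContinuousOn.mul
    · exact continuousOn_id.rpow_const (fun x hx => Or.inl (ne_of_gt hx))
    · exact (continuousOn_id.add continuousOn_const).rpow_const
        (fun x hx => Or.inl (by simp only [mem_Ioi] at hx; intro h; simp only [Pi.add_apply, id] at h; linarith))
  have hnonneg : ∀ t ∈ Ioi (0:ℝ), 0 ≤ t ^ (-a) * (t + R) ^ (-b) := fun t ht =>
    mul_nonneg (Real.rpow_nonneg (le_of_lt ht) _)
      (Real.rpow_nonneg (by simp only [mem_Ioi] at ht; linarith) _)
  -- majorant on Ioc 0 R
  have h1 : IntegrableOn (fun t : ℝ => t ^ (-a) * R ^ (-b)) (Ioc 0 R) volume := by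
    have : IntervalIntegrable (fun t : ℝ => t ^ (-a)) volume 0 R :=
      intervalIntegral.intervalIntegrable_rpow' (by linarith)
    exact ((intervalIntegrable_iff_integrableOn_Ioc_of_le hR0.le).mp this).mul_const _
  have hbd1 : ∀ t ∈ Ioc (0:ℝ) R, t ^ (-a) * (t + R) ^ (-b) ≤ t ^ (-a) * R ^ (-b) := by
    intro t ht
    exact mul_le_mul_of_nonneg_left
      (Real.rpow_le_rpow_of_nonpos hR0 (by linarith [ht.1]) (by linarith))
      (Real.rpow_nonneg ht.1.le _)
  -- majorant on Ioi R
  have h2 : IntegrableOn (fun t : ℝ => t ^ (-(a + b))) (Ioi R) volume :=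
    integrableOn_Ioi_rpow_of_lt (by linarith) hR0
  have hbd2 : ∀ t ∈ Ioi R, t ^ (-a) * (t + R) ^ (-b) ≤ t ^ (-(a + b)) := by
    intro t ht
    simp only [mem_Ioi] at ht
    have ht0 : 0 < t := lt_trans hR0 ht
    have h := Real.rpow_le_rpow_of_nonpos ht0 (by linarith : t ≤ t + R) (by linarith : -b ≤ 0)
    calc t ^ (-a) * (t + R) ^ (-b) ≤ t ^ (-a) * t ^ (-b) :=
          mul_le_mul_of_nonneg_left h (Real.rpow_nonneg ht0.le _)
      _ = t ^ (-(a + b)) := by rw [← Real.rpow_add ht0]; ring_nf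
  -- integrability of the majorant on the two pieces
  have hI1 : IntegrableOn (fun t : ℝ => t ^ (-a) * (t + R) ^ (-b)) (Ioc 0 R) volume := by
    refine h1.mono' ((hcont.mono Ioc_subset_Ioi_self).aestronglyMeasurable measurableSet_Ioc) ?_
    filter_upwards [ae_restrict_mem measurableSet_Ioc] with t ht
    rw [Real.norm_eq_abs, abs_of_nonneg (hnonneg t ht.1)]
    exact hbd1 t ht
  have hI2 : IntegrableOn (fun t : ℝ => t ^ (-a) * (t + R) ^ (-b)) (Ioi R) volume := by
    refine h2.mono' ((hcont.mono (Ioi_subset_Ioi hR0.le)).aestronglyMeasurable measurableSet_Ioi) ?_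
    filter_upwards [ae_restrict_mem measurableSet_Ioi] with t ht
    rw [Real.norm_eq_abs, abs_of_nonneg (hnonneg t (lt_trans hR0 ht))]
    exact hbd2 t ht
  have hunion : Ioc (0:ℝ) R ∪ Ioi R = Ioi 0 := Ioc_union_Ioi_eq_Ioi hR0.le
  have hInt : IntegrableOn (fun t : ℝ => t ^ (-a) * (t + R) ^ (-b)) (Ioi 0) volume := by
    rw [← hunion]; exact hI1.union hI2
  refine ⟨hInt, ?_⟩
  -- compute the two integral bounds
  have e1 : ∫ t in Ioc (0:ℝ) R, t ^ (-a) * (t + R) ^ (-b) ≤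
      (1 / (1 - a)) * R ^ (1 - a - b) := by
    have step : ∫ t in Ioc (0:ℝ) R, t ^ (-a) * (t + R) ^ (-b) ≤
        ∫ t in Ioc (0:ℝ) R, t ^ (-a) * R ^ (-b) :=
      setIntegral_mono_on hI1 h1 measurableSet_Ioc hbd1
    have hval : ∫ t in Ioc (0:ℝ) R, t ^ (-a) * R ^ (-b)
        = (R ^ (1 - a) / (1 - a)) * R ^ (-b) := by
      rw [integral_mul_const]
      have : ∫ t in Ioc (0:ℝ) R, t ^ (-a) = ∫ t in (0:ℝ)..R, t ^ (-a) := by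
        rw [intervalIntegral.integral_of_le hR0.le]
      rw [this, integral_rpow (Or.inl (by linarith))]
      rw [Real.zero_rpow (by linarith : -a + 1 ≠ 0)]
      ring_nf
    refine step.trans_eq ?_
    rw [hval, div_mul_eq_mul_div, ← Real.rpow_add hR0,
      show (1:ℝ) - a + -b = 1 - a - b by ring]
    ring
  have e2 : ∫ t in Ioi R, t ^ (-a) * (t + R) ^ (-b) ≤
      (1 / (a + b - 1)) * R ^ (1 - a - b) := by
    have step : ∫ t in Ioi R, t ^ (-a) * (t + R) ^ (-b) ≤
        ∫ t in Ioi R, t ^ (-(a + b)) :=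
      setIntegral_mono_on hI2 h2 measurableSet_Ioi hbd2
    have hval : ∫ t in Ioi R, t ^ (-(a + b)) = -R ^ (-(a + b) + 1) / (-(a + b) + 1) :=
      integral_Ioi_rpow_of_lt (by linarith) hR0
    refine step.trans_eq ?_
    have h0 : (1:ℝ) - a - b ≠ 0 := by intro h; nlinarith
    have key : (1:ℝ) / (a + b - 1) = -(1 / (1 - a - b)) := by
      rw [show a + b - 1 = -(1 - a - b) by ring, div_neg]
    rw [hval, show -(a + b) + 1 = 1 - a - b by ring, key]
    ring
  have hsplit : ∫ t in Ioi (0:ℝ), t ^ (-a) * (t + R) ^ (-b)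
      = (∫ t in Ioc (0:ℝ) R, t ^ (-a) * (t + R) ^ (-b))
        + ∫ t in Ioi R, t ^ (-a) * (t + R) ^ (-b) := by
    rw [← hunion]
    exact setIntegral_union (Ioc_disjoint_Ioi le_rfl) measurableSet_Ioi hI1 hI2
  rw [hsplit]
  calc _ ≤ (1 / (1 - a)) * R ^ (1 - a - b) + (1 / (a + b - 1)) * R ^ (1 - a - b) :=
        add_le_add e1 e2
    _ = (1 / (1 - a) + 1 / (a + b - 1)) * R ^ (1 - a - b) := by ring

/-- if `|u(t,x)| ≤ C (t+1+‖x‖)^{-n-1-m}` then `g(x) = ∫_0^∞ t^{-a} u(t,x) dt`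
converges absolutely and `|g(x)| ≤ C' (1+‖x‖)^{-n-a-m}`, with `C'` depending only on
`n, m, a, C`. -/
theorem subordinated_kernel_decay
    (n : ℕ) (hn : 1 ≤ n) (a : ℝ) (ha0 : 0 < a) (ha1 : a < 1)
    (m : ℝ) (hm : 0 ≤ m) (C : ℝ) (hC : 0 < C) :
    ∃ C' : ℝ, ∀ u : ℝ × EuclideanSpace ℝ (Fin n) → ℂ, Measurable u →
      (∀ t : ℝ, 0 < t → ∀ x, ‖u (t, x)‖ ≤ C * (t + 1 + ‖x‖) ^ (-(n : ℝ) - 1 - m)) →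
      ∀ x : EuclideanSpace ℝ (Fin n),
        IntegrableOn (fun t : ℝ => t ^ (-a) • u (t, x)) (Set.Ioi 0) volume ∧
        ‖∫ t in Set.Ioi (0 : ℝ), t ^ (-a) • u (t, x)‖ ≤
          C' * (1 + ‖x‖) ^ (-(n : ℝ) - a - m) := by
  set b : ℝ := (n : ℝ) + 1 + m with hbdef
  have hb : 1 < b := by
    have : (1:ℝ) ≤ (n:ℝ) := by exact_mod_cast hn
    simp only [hbdef]; linarith
  refine ⟨C * (1 / (1 - a) + 1 / (a + b - 1)), ?_⟩
  intro u hu hubd x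
  set R : ℝ := 1 + ‖x‖ with hRdef
  have hR : 1 ≤ R := by simp [hRdef, norm_nonneg]
  have hR0 : (0:ℝ) < R := lt_of_lt_of_le one_pos hR
  obtain ⟨hInt, hBound⟩ := majorant_facts ha0 ha1 hb hR
  have hmeasf : AEStronglyMeasurable (fun t : ℝ => t ^ (-a) • u (t, x))
      (volume.restrict (Ioi (0:ℝ))) := by
    refine AEStronglyMeasurable.smul (f := fun t : ℝ => t ^ (-a)) (g := fun t => u (t, x)) ?_ ?_
    · exact (continuousOn_id.rpow_const (fun y hy => Or.inl (ne_of_gt hy))).aestronglyMeasurable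
        measurableSet_Ioi
    · exact ((hu.comp (measurable_id.prodMk measurable_const)).aestronglyMeasurable).restrict
  have hptbd : ∀ᵐ t ∂(volume.restrict (Ioi (0:ℝ))),
      ‖t ^ (-a) • u (t, x)‖ ≤ C * (t ^ (-a) * (t + R) ^ (-b)) := by
    filter_upwards [ae_restrict_mem measurableSet_Ioi] with t ht
    simp only [mem_Ioi] at ht
    rw [norm_smul, Real.norm_eq_abs, abs_of_nonneg (Real.rpow_nonneg ht.le _)]
    have h1 : ‖u (t, x)‖ ≤ C * (t + R) ^ (-b) := by
      have := hubd t ht x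
      rw [show t + 1 + ‖x‖ = t + R by rw [hRdef]; ring,
        show -(n:ℝ) - 1 - m = -b by rw [hbdef]; ring] at this
      exact this
    calc t ^ (-a) * ‖u (t, x)‖ ≤ t ^ (-a) * (C * (t + R) ^ (-b)) :=
          mul_le_mul_of_nonneg_left h1 (Real.rpow_nonneg ht.le _)
      _ = C * (t ^ (-a) * (t + R) ^ (-b)) := by ring
  have hIntf : IntegrableOn (fun t : ℝ => t ^ (-a) • u (t, x)) (Ioi 0) volume :=
    Integrable.mono' (hInt.const_mul C) hmeasf hptbd
  refine ⟨hIntf, ?_⟩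
  have hnib : ‖∫ t in Ioi (0:ℝ), t ^ (-a) • u (t, x)‖ ≤
      ∫ t in Ioi (0:ℝ), C * (t ^ (-a) * (t + R) ^ (-b)) := by
    refine norm_integral_le_of_norm_le (hInt.const_mul C) hptbd
  have hconv : ∫ t in Ioi (0:ℝ), C * (t ^ (-a) * (t + R) ^ (-b))
      = C * ∫ t in Ioi (0:ℝ), t ^ (-a) * (t + R) ^ (-b) := integral_const_mul _ _
  have hexp : (1 : ℝ) - a - b = -(n:ℝ) - a - m := by rw [hbdef]; ring
  calc ‖∫ t in Ioi (0:ℝ), t ^ (-a) • u (t, x)‖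
      ≤ C * ∫ t in Ioi (0:ℝ), t ^ (-a) * (t + R) ^ (-b) := by rw [← hconv]; exact hnib
    _ ≤ C * ((1 / (1 - a) + 1 / (a + b - 1)) * R ^ (1 - a - b)) :=
        mul_le_mul_of_nonneg_left hBound hC.le
    _ = C * (1 / (1 - a) + 1 / (a + b - 1)) * (1 + ‖x‖) ^ (-(n:ℝ) - a - m) := by
        rw [hexp, hRdef]; ring
end
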